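/- Under the gyration H_Γ of Lemma 'connect-preserv': if two degree-2 vertices v₁, v₂ are endpoints of a black path in φ, then they are endpoints of a black path in H_Γ(φ); the same holds for white paths. Hence H_Γ preserves the black and white endpoint pairings (π_b, π_w) of a fully-packed loop configuration, and preserves the total number ℓ of monochromatic cycles. -/

import Mathlib

open Finset
set_option linter.unusedSectionVars false
set_option maxHeartbeats 1000000

variable {V E : Type*} [Fintype V] [Fintype E] [DecidableEq V] [DecidableEq E]

/-- Multiplicity with which an edge `e` is incident to the vertex `v`. -/
def emult (ends : E → Sym2 V) (e : E) (v : V) : ℕ :=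
  if ends e = s(v, v) then 2 else if v ∈ ends e then 1 else 0

/-- Degree of a vertex. -/
def vdeg (ends : E → Sym2 V) (v : V) : ℕ := ∑ e : E, emult ends e v

/-- Black degree of a vertex under a 2-coloring `c` (`true` = black). -/
def bdeg (ends : E → Sym2 V) (c : E → Bool) (v : V) : ℕ :=
  ∑ e : E, if c e then emult ends e v else 0

/-- Degree of a vertex within a set `S` of edges. -/
def gdeg (ends : E → Sym2 V) (S : Finset E) (v : V) : ℕ := ∑ e ∈ S, emult ends e v

/-- Black degree of a vertex within a set `S` of edges. -/
def gbdeg (ends : E → Sym2 V) (c : E → Bool) (S : Finset E) (v : V) : ℕ :=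
  ∑ e ∈ S, if c e then emult ends e v else 0

/-- A fully-packed loop configuration. -/
def IsFPL (ends : E → Sym2 V) (c : E → Bool) : Prop :=
  ∀ v : V, (vdeg ends v = 4 → bdeg ends c v = 2) ∧ (vdeg ends v = 2 → bdeg ends c v = 1)

/-- Alternating coloring on a cycle. -/
def AltOn (ends : E → Sym2 V) (c : E → Bool) (S : Finset E) : Prop :=
  ∀ v : V, gdeg ends S v = 2 → gbdeg ends c S v = 1

instance (ends : E → Sym2 V) (c : E → Bool) (S : Finset E) : Decidable (AltOn ends c S) := by
  unfold AltOn; infer_instance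

/-- The gyration `H_Γ` associated to a cycle decomposition `cls` and a marking
`punct` of punctured cycles. -/
def gyr (ends : E → Sym2 V) (cls : E → Finset E) (punct : Finset E → Bool)
    (c : E → Bool) : E → Bool :=
  fun e =>
    if ((cls e).card = 4 ∨ ((cls e).card = 2 ∧ punct (cls e) = true)) ∧ AltOn ends c (cls e)
    then c e else !(c e)

/-- The monochromatic subgraph of color `b` of a coloring `c`. -/
def monoGraph (ends : E → Sym2 V) (c : E → Bool) (b : Bool) : SimpleGraph V where
  Adj v w := v ≠ w ∧ ∃ e, c e = b ∧ ends e = s(v, w)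
  symm := by
    constructor
    rintro v w ⟨hvw, e, he, hee⟩
    exact ⟨hvw.symm, e, he, hee.trans (Sym2.eq_swap)⟩
  loopless := ⟨fun v h => h.1 rfl⟩

/-- The number of monochromatic cycles of color `b`: the number of connected
components of the monochromatic subgraph containing no degree-2 vertex (the
components containing degree-2 vertices are the open paths and the isolated
degree-2 vertices). -/
noncomputable def cycCount (ends : E → Sym2 V) (c : E → Bool) (b : Bool) : ℕ :=
  Nat.card {C : (monoGraph ends c b).ConnectedComponent //
    ∀ v ∈ C.supp, vdeg ends v ≠ 2}

section Basic
variable (ends : E → Sym2 V)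

lemma ends_cases (e : E) : ∃ x y : V, ends e = s(x, y) := by
  exact Sym2.inductionOn (f := fun i => ∃ x y : V, i = s(x, y)) (ends e) (fun x y => ⟨x, y, rfl⟩)

lemma emult_loop_eq {e : E} {x : V} (h : ends e = s(x, x)) (v : V) :
    emult ends e v = if v = x then 2 else 0 := by
  simp only [emult, h]
  by_cases hv : v = x
  · subst hv; simp
  · simp [Sym2.eq_iff, hv, Ne.symm hv]

lemma emult_edge_eq {e : E} {x y : V} (hxy : x ≠ y) (h : ends e = s(x, y)) (v : V) :
    emult ends e v = (if v = x then 1 else 0) + (if v = y then 1 else 0) := by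
  simp only [emult, h]
  by_cases hv : v = x
  · subst hv; simp [Sym2.eq_iff, hxy, Ne.symm hxy]
  · by_cases hv' : v = y
    · subst hv'; simp [Sym2.eq_iff, hv, hxy, Ne.symm hxy, Ne.symm hv]
    · simp [Sym2.eq_iff, hv, hv', Ne.symm hv, Ne.symm hv']

lemma sum_emult (e : E) : ∑ v : V, emult ends e v = 2 := by
  obtain ⟨x, y, h⟩ := ends_cases ends e
  by_cases hxy : x = y
  · subst hxy
    simp [emult_loop_eq ends h]
  · simp [emult_edge_eq ends hxy h, Finset.sum_add_distrib]

lemma emult_of_ne {e : E} {x y : V} (hxy : x ≠ y) (h : ends e = s(x, y)) :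
    emult ends e x = 1 ∧ emult ends e y = 1 := by
  constructor <;> simp [emult, h, Sym2.eq_iff, hxy, Ne.symm hxy]

lemma gbdeg_le_gdeg (c : E → Bool) (S : Finset E) (v : V) :
    gbdeg ends c S v ≤ gdeg ends S v :=
  Finset.sum_le_sum fun e _ => by by_cases h : c e <;> simp [h]

lemma gbdeg_add_neg (c : E → Bool) (S : Finset E) (v : V) :
    gbdeg ends c S v + gbdeg ends (fun e => !c e) S v = gdeg ends S v := by
  simp only [gbdeg, gdeg]
  rw [← Finset.sum_add_distrib]
  refine Finset.sum_congr rfl fun e _ => ?_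
  by_cases h : c e <;> simp [h]

lemma sum_gdeg (S : Finset E) : ∑ v : V, gdeg ends S v = 2 * S.card := by
  simp only [gdeg]
  rw [Finset.sum_comm]
  simp [sum_emult, mul_comm]

lemma sum_gbdeg (c : E → Bool) (S : Finset E) :
    ∑ v : V, gbdeg ends c S v = 2 * (S.filter (fun e => c e = true)).card := by
  simp only [gbdeg]
  rw [Finset.sum_comm]
  have : ∀ e ∈ S, (∑ v : V, if c e then emult ends e v else 0)
      = if c e = true then 2 else 0 := by
    intro e _
    by_cases h : c e <;> simp [h, sum_emult]
  rw [Finset.sum_congr rfl this, ← Finset.sum_filter]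
  simp [mul_comm]

end Basic

section Classes
variable (ends : E → Sym2 V) (cls : E → Finset E)

/-- `v` is exposed (a potential path endpoint / arc boundary) for coloring `c`. -/
def expo (c : E → Bool) (v : V) : Prop := ∀ e : E, gbdeg ends c (cls e) v ≤ 1

variable {ends cls}
variable {punct : Finset E → Bool} {c : E → Bool}

lemma bdeg_eq_gbdeg_univ (v : V) : bdeg ends c v = gbdeg ends c Finset.univ v := rfl

lemma vdeg_eq_gdeg_univ (v : V) : vdeg ends v = gdeg ends Finset.univ v := rfl

lemma bdeg_add_neg (v : V) :
    bdeg ends c v + bdeg ends (fun e => !c e) v = vdeg ends v := by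
  rw [bdeg_eq_gbdeg_univ, bdeg_eq_gbdeg_univ, vdeg_eq_gdeg_univ]
  exact gbdeg_add_neg ends c Finset.univ v

lemma cls_disjoint (hcls : ∀ e e', e' ∈ cls e → cls e' = cls e) {e f : E}
    (h : cls e ≠ cls f) : Disjoint (cls e) (cls f) := by
  rw [Finset.disjoint_left]
  intro a hae haf
  exact h ((hcls e a hae).symm.trans (hcls f a haf))

lemma sum1_le (w : E → ℕ) (e : E) : ∑ a ∈ cls e, w a ≤ ∑ a : E, w a :=
  Finset.sum_le_sum_of_subset (Finset.subset_univ _)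

lemma sum2_le (hcls : ∀ e e', e' ∈ cls e → cls e' = cls e) {e f : E}
    (hef : cls e ≠ cls f) (w : E → ℕ) :
    (∑ a ∈ cls e, w a) + ∑ a ∈ cls f, w a ≤ ∑ a : E, w a := by
  rw [← Finset.sum_union (cls_disjoint hcls hef)]
  exact Finset.sum_le_sum_of_subset (Finset.subset_univ _)

lemma sum3_le (hcls : ∀ e e', e' ∈ cls e → cls e' = cls e) {e f g : E}
    (hef : cls e ≠ cls f) (heg : cls e ≠ cls g) (hfg : cls f ≠ cls g) (w : E → ℕ) :
    ((∑ a ∈ cls e, w a) + ∑ a ∈ cls f, w a) + ∑ a ∈ cls g, w a ≤ ∑ a : E, w a := by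
  rw [← Finset.sum_union (cls_disjoint hcls hef),
    ← Finset.sum_union (by
      rw [Finset.disjoint_union_left]
      exact ⟨cls_disjoint hcls heg, cls_disjoint hcls hfg⟩)]
  exact Finset.sum_le_sum_of_subset (Finset.subset_univ _)

lemma exists_pos_of_sum_pos {s : Finset E} {w : E → ℕ} (h : 0 < ∑ a ∈ s, w a) :
    ∃ a ∈ s, 0 < w a := by
  by_contra hno
  push_neg at hno
  have : ∑ a ∈ s, w a = 0 := Finset.sum_eq_zero (fun a ha => Nat.le_zero.mp (hno a ha))
  omega

lemma term_le_gbdeg {e f : E} {v : V} (hf : f ∈ cls e) :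
    (if c f then emult ends f v else 0) ≤ gbdeg ends c (cls e) v :=
  Finset.single_le_sum (f := fun a => if c a then emult ends a v else 0)
    (fun a _ => Nat.zero_le _) hf

lemma term_le_gdeg {e f : E} {v : V} (hf : f ∈ cls e) :
    emult ends f v ≤ gdeg ends (cls e) v :=
  Finset.single_le_sum (f := fun a => emult ends a v) (fun a _ => Nat.zero_le _) hf

section WithHyps
variable (hmem : ∀ e, e ∈ cls e)
variable (hcls : ∀ e e', e' ∈ cls e → cls e' = cls e)
variable (hloc : ∀ e v, gdeg ends (cls e) v = 0 ∨ gdeg ends (cls e) v = 2)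
variable (hdeg : ∀ v, vdeg ends v = 2 ∨ vdeg ends v = 4)
variable (hc : IsFPL ends c)

include hdeg hc in
lemma bdeg_le_two (v : V) : bdeg ends c v ≤ 2 := by
  rcases hdeg v with h | h
  · rw [(hc v).2 h]; omega
  · rw [(hc v).1 h]

include hdeg hc in
lemma bdeg_pos (v : V) : 1 ≤ bdeg ends c v := by
  rcases hdeg v with h | h
  · rw [(hc v).2 h]
  · rw [(hc v).1 h]; omega

include hdeg hc in
lemma vdeg2_expo {v : V} (h : vdeg ends v = 2) : expo ends cls c v := by
  intro e
  have h1 := (hc v).2 h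
  have := sum1_le (cls := cls) (fun a => if c a then emult ends a v else 0) e
  rw [← gbdeg] at this
  rw [← bdeg] at this
  omega

include hmem hcls hloc hdeg hc in
lemma expo_boundary {v : V} {e0 : E} (hx : expo ends cls c v)
    (h2 : gdeg ends (cls e0) v = 2) : gbdeg ends c (cls e0) v = 1 := by
  have hb1 : gbdeg ends c (cls e0) v ≤ 1 := hx e0
  rcases Nat.eq_zero_or_pos (gbdeg ends c (cls e0) v) with h0 | hpos
  swap
  · omega
  exfalso
  -- bdeg v ≥ 1, so there is a black edge at v outside cls e0
  have hble := bdeg_le_two hdeg hc v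
  have hbpos := bdeg_pos hdeg hc v
  have hsplit : (∑ a ∈ cls e0, if c a then emult ends a v else 0)
      + ∑ a ∈ Finset.univ \ cls e0, (if c a then emult ends a v else 0)
      = bdeg ends c v := by
    rw [add_comm, Finset.sum_sdiff (Finset.subset_univ _)]; rfl
  rw [← gbdeg, h0, zero_add] at hsplit
  have hpos1 : 0 < ∑ a ∈ Finset.univ \ cls e0, (if c a then emult ends a v else 0) := by
    omega
  obtain ⟨e1, he1mem, he1pos⟩ := exists_pos_of_sum_pos hpos1
  rw [Finset.mem_sdiff] at he1mem
  have he1c : c e1 = true := by by_contra h; simp [Bool.not_eq_true] at h; simp [h] at he1pos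
  have he1em : 1 ≤ emult ends e1 v := by rw [he1c] at he1pos; simp at he1pos; omega
  have hne01 : cls e0 ≠ cls e1 := by
    intro h
    exact he1mem.2 (h ▸ hmem e1)
  have hgb1 : 1 ≤ gbdeg ends c (cls e1) v := by
    have := term_le_gbdeg (ends := ends) (c := c) (hmem e1) (v := v)
    rw [he1c] at this; simp at this; omega
  have hgd1 : gdeg ends (cls e1) v = 2 := by
    rcases hloc e1 v with h | h
    · have := term_le_gdeg (ends := ends) (hmem e1) (v := v); omega
    · exact h
  have hv4 : vdeg ends v = 4 := by
    have := sum2_le hcls hne01 (fun a => emult ends a v)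
    rw [← gdeg, ← gdeg, h2, hgd1, ← vdeg] at this
    rcases hdeg v with h | h <;> omega
  have hb2 : bdeg ends c v = 2 := (hc v).1 hv4
  have hgb1' : gbdeg ends c (cls e1) v = 1 := le_antisymm (hx e1) hgb1
  -- find a third black class
  have hsplit2 : gbdeg ends c (cls e0) v + gbdeg ends c (cls e1) v
      + ∑ a ∈ Finset.univ \ (cls e0 ∪ cls e1), (if c a then emult ends a v else 0)
      = bdeg ends c v := by
    rw [gbdeg, gbdeg, ← Finset.sum_union (cls_disjoint hcls hne01), add_comm,
      Finset.sum_sdiff (Finset.subset_univ _)]; rfl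
  rw [h0, hgb1', hb2] at hsplit2
  have hpos2 : 0 < ∑ a ∈ Finset.univ \ (cls e0 ∪ cls e1),
      (if c a then emult ends a v else 0) := by omega
  obtain ⟨e2, he2mem, he2pos⟩ := exists_pos_of_sum_pos hpos2
  rw [Finset.mem_sdiff, Finset.mem_union] at he2mem
  push_neg at he2mem
  have he2em : 1 ≤ emult ends e2 v := by
    by_cases h : c e2 <;> simp [h] at he2pos; omega
  have hne02 : cls e0 ≠ cls e2 := fun h => he2mem.2.1 (h ▸ hmem e2)
  have hne12 : cls e1 ≠ cls e2 := fun h => he2mem.2.2 (h ▸ hmem e2)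
  have hgd2 : gdeg ends (cls e2) v = 2 := by
    rcases hloc e2 v with h | h
    · have := term_le_gdeg (ends := ends) (hmem e2) (v := v); omega
    · exact h
  have := sum3_le hcls hne01 hne02 hne12 (fun a => emult ends a v)
  rw [← gdeg, ← gdeg, ← gdeg, h2, hgd1, hgd2, ← vdeg, hv4] at this
  omega

include hmem hcls hloc hdeg hc in
lemma nonexpo_struct {v : V} (hv : ¬ expo ends cls c v) :
    ∃ e0 e2 : E, gbdeg ends c (cls e0) v = 2 ∧ gdeg ends (cls e0) v = 2 ∧
      gdeg ends (cls e2) v = 2 ∧ gbdeg ends c (cls e2) v = 0 ∧ cls e0 ≠ cls e2 ∧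
      vdeg ends v = 4 ∧ bdeg ends c v = 2 ∧
      (∀ f, c f = true → 1 ≤ emult ends f v → f ∈ cls e0) ∧
      (∀ f, c f = false → 1 ≤ emult ends f v → f ∈ cls e2) := by
  simp only [expo, not_forall] at hv
  obtain ⟨e0, he0⟩ := hv
  have hge : 2 ≤ gbdeg ends c (cls e0) v := by omega
  have hled : gbdeg ends c (cls e0) v ≤ gdeg ends (cls e0) v := gbdeg_le_gdeg ends c _ v
  have hgd0 : gdeg ends (cls e0) v = 2 := by
    rcases hloc e0 v with h | h
    · omega
    · exact h
  have hgb0 : gbdeg ends c (cls e0) v = 2 := by omega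
  have hble := bdeg_le_two hdeg hc v
  have hgb_le_b : gbdeg ends c (cls e0) v ≤ bdeg ends c v :=
    sum1_le (cls := cls) (fun a => if c a then emult ends a v else 0) e0
  have hb2 : bdeg ends c v = 2 := by omega
  have hv4 : vdeg ends v = 4 := by
    rcases hdeg v with h | h
    · exfalso; have := (hc v).2 h; omega
    · exact h
  -- within cls e0 every incident edge is black
  have hwhite0 : gbdeg ends (fun e => !c e) (cls e0) v = 0 := by
    have := gbdeg_add_neg ends c (cls e0) v
    omega
  have hblackmem : ∀ f, c f = true → 1 ≤ emult ends f v → f ∈ cls e0 := by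
    intro f hf hem
    by_contra hnf
    have hne : cls e0 ≠ cls f := fun h => hnf (h ▸ hmem f)
    have h1 : 1 ≤ gbdeg ends c (cls f) v := by
      have := term_le_gbdeg (ends := ends) (c := c) (hmem f) (v := v)
      rw [hf] at this; simp at this; omega
    have := sum2_le hcls hne (fun a => if c a then emult ends a v else 0)
    rw [← gbdeg, ← gbdeg, ← bdeg] at this
    omega
  -- find a white edge at v
  have hwv : bdeg ends (fun e => !c e) v = 2 := by
    have := bdeg_add_neg (ends := ends) (c := c) v
    omega
  have hpos : 0 < ∑ a : E, (if !c a then emult ends a v else 0) := by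
    have : bdeg ends (fun e => !c e) v = ∑ a : E, (if !c a then emult ends a v else 0) := rfl
    omega
  obtain ⟨e2, _, he2pos⟩ := exists_pos_of_sum_pos (s := Finset.univ) (by simpa using hpos)
  have he2c : c e2 = false := by
    by_contra h
    simp [Bool.not_eq_false] at h
    simp [h] at he2pos
  have he2em : 1 ≤ emult ends e2 v := by rw [he2c] at he2pos; simp at he2pos; omega
  have he2n0 : e2 ∉ cls e0 := by
    intro hmem2
    have : 1 ≤ gbdeg ends (fun e => !c e) (cls e0) v := by
      have := term_le_gbdeg (ends := ends) (c := fun e => !c e) hmem2 (v := v)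
      simp only [he2c] at this
      simp at this
      omega
    omega
  have hne02 : cls e0 ≠ cls e2 := fun h => he2n0 (h ▸ hmem e2)
  have hgd2 : gdeg ends (cls e2) v = 2 := by
    rcases hloc e2 v with h | h
    · have := term_le_gdeg (ends := ends) (hmem e2) (v := v); omega
    · exact h
  have hgb2 : gbdeg ends c (cls e2) v = 0 := by
    have := sum2_le hcls hne02 (fun a => if c a then emult ends a v else 0)
    rw [← gbdeg, ← gbdeg, ← bdeg] at this
    omega
  refine ⟨e0, e2, hgb0, hgd0, hgd2, hgb2, hne02, hv4, hb2, hblackmem, ?_⟩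
  intro f hf hem
  by_contra hnf
  have hnf0 : f ∉ cls e0 := by
    intro hmem2
    have : 1 ≤ gbdeg ends (fun e => !c e) (cls e0) v := by
      have := term_le_gbdeg (ends := ends) (c := fun e => !c e) hmem2 (v := v)
      simp only [hf] at this
      simp at this
      omega
    omega
  have hnef : cls e0 ≠ cls f := fun h => hnf0 (h ▸ hmem f)
  have hnef2 : cls e2 ≠ cls f := fun h => hnf (h ▸ hmem f)
  have hgdf : gdeg ends (cls f) v = 2 := by
    rcases hloc f v with h | h
    · have := term_le_gdeg (ends := ends) (hmem f) (v := v); omega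
    · exact h
  have := sum3_le hcls hne02 hnef hnef2 (fun a => emult ends a v)
  rw [← gdeg, ← gdeg, ← gdeg, hgd0, hgd2, hgdf, ← vdeg, hv4] at this
  omega

end WithHyps
end Classes

section Res
variable (ends : E → Sym2 V)

/-- Subgraph spanned by a set of edges. -/
def resG (T : Finset E) : SimpleGraph V where
  Adj v w := v ≠ w ∧ ∃ e ∈ T, ends e = s(v, w)
  symm := by constructor; rintro v w ⟨h, e, he, hee⟩; exact ⟨h.symm, e, he, hee.trans Sym2.eq_swap⟩
  loopless := ⟨fun v h => h.1 rfl⟩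

variable {ends}

lemma resG_le_mono {T : Finset E} {c : E → Bool} {b : Bool}
    (h : ∀ e ∈ T, c e = b) : resG ends T ≤ monoGraph ends c b := by
  rintro v w ⟨hvw, e, he, hee⟩
  exact ⟨hvw, e, h e he, hee⟩

lemma even_sum_nat {s : Finset V} {f : V → ℕ} (h : ∀ x ∈ s, Even (f x)) :
    Even (∑ x ∈ s, f x) :=
  Finset.sum_induction f Even (fun _ _ => Even.add) Even.zero h

lemma handshake (T : Finset E) (u w : V) (huw : u ≠ w)
    (hu : Odd (∑ e ∈ T, emult ends e u)) (hw : Odd (∑ e ∈ T, emult ends e w))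
    (ho : ∀ v, v ≠ u → v ≠ w → Even (∑ e ∈ T, emult ends e v)) :
    (resG ends T).Reachable u w := by
  classical
  by_contra hreach
  set D := Finset.univ.filter (fun v => (resG ends T).Reachable u v) with hD
  have hmemD : ∀ v, v ∈ D ↔ (resG ends T).Reachable u v := by
    intro v; simp [hD]
  have hedge : ∀ e ∈ T, Even (∑ v ∈ D, emult ends e v) := by
    intro e he
    obtain ⟨x, y, h⟩ := ends_cases ends e
    by_cases hxy : x = y
    · subst hxy
      simp only [emult_loop_eq ends h]
      rw [Finset.sum_ite_eq' D x (fun _ => 2)]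
      split <;> simp
    · have hadj : (resG ends T).Adj x y := ⟨hxy, e, he, h⟩
      have hiff : x ∈ D ↔ y ∈ D := by
        rw [hmemD, hmemD]
        exact ⟨fun hr => hr.trans hadj.reachable, fun hr => hr.trans hadj.symm.reachable⟩
      simp only [emult_edge_eq ends hxy h]
      rw [Finset.sum_add_distrib, Finset.sum_ite_eq' D x (fun _ => 1),
        Finset.sum_ite_eq' D y (fun _ => 1)]
      by_cases hx : x ∈ D
      · simp [hx, hiff.mp hx]
      · have hy : y ∉ D := fun hy => hx (hiff.mpr hy)
        simp [hx, hy]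
  have htot : Even (∑ v ∈ D, ∑ e ∈ T, emult ends e v) := by
    rw [Finset.sum_comm]
    exact even_sum_nat (f := fun e => ∑ v ∈ D, emult ends e v) hedge
  have huD : u ∈ D := (hmemD u).mpr (SimpleGraph.Reachable.refl u)
  have hwD : w ∉ D := fun h => hreach ((hmemD w).mp h)
  have hsplit : ∑ v ∈ D, (∑ e ∈ T, emult ends e v)
      = (∑ e ∈ T, emult ends e u) + ∑ v ∈ D.erase u, (∑ e ∈ T, emult ends e v) :=
    (Finset.add_sum_erase D (fun v => ∑ e ∈ T, emult ends e v) huD).symm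
  have herase : Even (∑ v ∈ D.erase u, (∑ e ∈ T, emult ends e v)) := by
    apply even_sum_nat
    intro x hx
    have hxu : x ≠ u := Finset.ne_of_mem_erase hx
    have hxw : x ≠ w := fun h => hwD (h ▸ (Finset.mem_of_mem_erase hx))
    exact ho x hxu hxw
  rw [hsplit] at htot
  obtain ⟨a, ha⟩ := htot
  obtain ⟨b, hb⟩ := herase
  obtain ⟨k, hk⟩ := hu
  omega

end Res

section Gyr
variable {ends : E → Sym2 V} {cls : E → Finset E} {punct : Finset E → Bool} {c : E → Bool}

/-- The condition under which gyration keeps the colors of a class. -/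
def KeepC (ends : E → Sym2 V) (punct : Finset E → Bool) (c : E → Bool) (S : Finset E) : Prop :=
  (S.card = 4 ∨ (S.card = 2 ∧ punct S = true)) ∧ AltOn ends c S

instance (ends : E → Sym2 V) (punct : Finset E → Bool) (c : E → Bool) (S : Finset E) :
    Decidable (KeepC ends punct c S) := by
  unfold KeepC; infer_instance

lemma gyr_eq (e : E) : gyr ends cls punct c e =
    if KeepC ends punct c (cls e) then c e else !(c e) :=
  if_congr Iff.rfl rfl rfl

lemma gyr_eq_keep {e0 e : E} (hcls : ∀ e e', e' ∈ cls e → cls e' = cls e)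
    (he : e ∈ cls e0) (h : KeepC ends punct c (cls e0)) :
    gyr ends cls punct c e = c e := by
  rw [gyr_eq, hcls e0 e he, if_pos h]

lemma gyr_eq_flip {e0 e : E} (hcls : ∀ e e', e' ∈ cls e → cls e' = cls e)
    (he : e ∈ cls e0) (h : ¬ KeepC ends punct c (cls e0)) :
    gyr ends cls punct c e = !(c e) := by
  rw [gyr_eq, hcls e0 e he, if_neg h]

lemma gbdeg_gyr_keep {e0 : E} (hcls : ∀ e e', e' ∈ cls e → cls e' = cls e)
    (h : KeepC ends punct c (cls e0)) (v : V) :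
    gbdeg ends (gyr ends cls punct c) (cls e0) v = gbdeg ends c (cls e0) v :=
  Finset.sum_congr rfl fun e he => by rw [gyr_eq_keep hcls he h]

lemma gbdeg_gyr_flip {e0 : E} (hcls : ∀ e e', e' ∈ cls e → cls e' = cls e)
    (h : ¬ KeepC ends punct c (cls e0)) (v : V) :
    gbdeg ends (gyr ends cls punct c) (cls e0) v
      = gbdeg ends (fun e => !(c e)) (cls e0) v :=
  Finset.sum_congr rfl fun e he => by rw [gyr_eq_flip hcls he h]

lemma gbdeg_gyr_flip' {e0 : E} (hcls : ∀ e e', e' ∈ cls e → cls e' = cls e)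
    (h : ¬ KeepC ends punct c (cls e0)) (v : V) :
    gbdeg ends (gyr ends cls punct c) (cls e0) v
      + gbdeg ends c (cls e0) v = gdeg ends (cls e0) v := by
  rw [gbdeg_gyr_flip hcls h, add_comm]
  exact gbdeg_add_neg ends c _ v

/-- A flipped class has at most two boundary vertices. -/
lemma boundary_card (hmem : ∀ e, e ∈ cls e)
    (hcls : ∀ e e', e' ∈ cls e → cls e' = cls e)
    (hlen : ∀ e, (cls e).card ≤ 4)
    (hloc : ∀ e v, gdeg ends (cls e) v = 0 ∨ gdeg ends (cls e) v = 2)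
    {e0 : E} (hflip : ¬ KeepC ends punct c (cls e0)) {u w z : V}
    (hu : gbdeg ends c (cls e0) u = 1) (hw : gbdeg ends c (cls e0) w = 1)
    (huw : u ≠ w) (hzu : z ≠ u) (hzw : z ≠ w) :
    gbdeg ends c (cls e0) z ≠ 1 := by
  intro hz
  classical
  set S := cls e0 with hS
  set B1 := Finset.univ.filter (fun x => gbdeg ends c S x = 1) with hB1
  set G2 := Finset.univ.filter (fun x => gdeg ends S x = 2) with hG2
  have hb1mem : ∀ x, x ∈ B1 ↔ gbdeg ends c S x = 1 := by intro x; simp [hB1]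
  have hg2mem : ∀ x, x ∈ G2 ↔ gdeg ends S x = 2 := by intro x; simp [hG2]
  have hsub : B1 ⊆ G2 := by
    intro x hx
    rw [hb1mem] at hx
    rw [hg2mem]
    have := gbdeg_le_gdeg ends c S x
    rcases hloc e0 x with h | h
    · rw [← hS] at h; omega
    · rw [← hS] at h; exact h
  -- total sums
  have hsum1 : ∑ x : V, gbdeg ends c S x = 2 * (S.filter (fun e => c e = true)).card :=
    sum_gbdeg ends c S
  have hsum2 : ∑ x : V, gdeg ends S x = 2 * S.card := sum_gdeg ends S
  -- G2.card = S.card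
  have hg2card : 2 * G2.card = 2 * S.card := by
    rw [← hsum2]
    rw [← Finset.sum_filter_add_sum_filter_not Finset.univ (fun x => gdeg ends S x = 2)]
    have h1 : ∑ x ∈ G2, gdeg ends S x = 2 * G2.card := by
      rw [Finset.sum_congr rfl (fun x hx => (hg2mem x).mp hx)]
      simp [mul_comm]
    have h2 : ∑ x ∈ Finset.univ.filter (fun x => ¬ gdeg ends S x = 2), gdeg ends S x = 0 := by
      apply Finset.sum_eq_zero
      intro x hx
      simp only [Finset.mem_filter] at hx
      rcases hloc e0 x with h | h
      · rw [← hS] at h; exact h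
      · rw [← hS] at h; exact absurd h hx.2
    rw [h2]
    simpa using h1.symm
  -- B1.card is even
  have hb1card : ∑ x : V, gbdeg ends c S x
      = B1.card + ∑ x ∈ Finset.univ.filter (fun x => ¬ gbdeg ends c S x = 1),
          gbdeg ends c S x := by
    rw [← Finset.sum_filter_add_sum_filter_not Finset.univ (fun x => gbdeg ends c S x = 1)]
    congr 1
    rw [Finset.sum_congr rfl (fun x hx => (hb1mem x).mp hx)]
    simp
  have heven : Even (∑ x ∈ Finset.univ.filter (fun x => ¬ gbdeg ends c S x = 1),
      gbdeg ends c S x) := by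
    apply even_sum_nat
    intro x hx
    simp only [Finset.mem_filter] at hx
    have hle := gbdeg_le_gdeg ends c S x
    have : gdeg ends S x = 0 ∨ gdeg ends S x = 2 := by
      rcases hloc e0 x with h | h
      · left; rw [← hS] at h; exact h
      · right; rw [← hS] at h; exact h
    have hx2 := hx.2
    have hle2 : gbdeg ends c S x ≤ 2 := by rcases this with h | h <;> omega
    rcases Nat.lt_or_ge (gbdeg ends c S x) 1 with h | h
    · have h0 : gbdeg ends c S x = 0 := by omega
      rw [h0]; exact Even.zero
    · have h2 : gbdeg ends c S x = 2 := by omega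
      rw [h2]; exact even_two
  have h3 : 3 ≤ B1.card := by
    have : ({u, w, z} : Finset V) ⊆ B1 := by
      intro x hx
      simp only [Finset.mem_insert, Finset.mem_singleton] at hx
      rcases hx with rfl | rfl | rfl <;> rw [hb1mem] <;> assumption
    have hcard : ({u, w, z} : Finset V).card = 3 := by
      rw [Finset.card_insert_of_notMem (by simp [huw, Ne.symm hzu]),
        Finset.card_insert_of_notMem (by simp [Ne.symm hzw])]
      rfl
    calc 3 = ({u, w, z} : Finset V).card := hcard.symm
    _ ≤ B1.card := Finset.card_le_card this
  have h4 : 4 ≤ B1.card := by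
    obtain ⟨k, hk⟩ := heven
    omega
  have hcards : B1.card = G2.card := by
    have := Finset.card_le_card hsub
    have hlen0 := hlen e0
    rw [← hS] at hlen0
    omega
  have hBG : B1 = G2 := Finset.eq_of_subset_of_card_le hsub (le_of_eq hcards.symm)
  have halt : AltOn ends c S := by
    intro x hx
    have : x ∈ G2 := (hg2mem x).mpr hx
    rw [← hBG, hb1mem] at this
    exact this
  have hcard4 : S.card = 4 := by
    have hlen0 := hlen e0
    rw [← hS] at hlen0
    omega
  exact hflip ⟨Or.inl hcard4, halt⟩

end Gyr

section Cut
variable {ends : E → Sym2 V} {cls : E → Finset E} {punct : Finset E → Bool} {c : E → Bool}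
variable (hmem : ∀ e, e ∈ cls e)
variable (hcls : ∀ e e', e' ∈ cls e → cls e' = cls e)
variable (hlen : ∀ e, (cls e).card ≤ 4)
variable (hloc : ∀ e v, gdeg ends (cls e) v = 0 ∨ gdeg ends (cls e) v = 2)

lemma filter_deg (d : E → Bool) (S : Finset E) (v : V) :
    ∑ e ∈ S.filter (fun e => d e = true), emult ends e v = gbdeg ends d S v := by
  rw [gbdeg, Finset.sum_filter]

lemma filter_deg_not (d : E → Bool) (S : Finset E) (v : V) :
    ∑ e ∈ S.filter (fun e => ¬ d e = true), emult ends e v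
      + gbdeg ends d S v = gdeg ends S v := by
  rw [← filter_deg (ends := ends) d S v, add_comm]
  exact Finset.sum_filter_add_sum_filter_not S (fun e => d e = true) _

include hmem hcls hlen hloc in
lemma cut_fwd {u x : V} {e1 : E}
    (hu : gbdeg ends c (cls e1) u = 1) (hx : gbdeg ends c (cls e1) x = 1) (hux : u ≠ x)
    (hr : (resG ends ((cls e1).filter (fun e => c e = true))).Reachable u x) :
    (monoGraph ends (gyr ends cls punct c) true).Reachable u x := by
  by_cases hk : KeepC ends punct c (cls e1)
  · refine hr.mono (resG_le_mono ?_)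
    intro e he
    rw [Finset.mem_filter] at he
    rw [gyr_eq_keep hcls he.1 hk]
    exact he.2
  · refine SimpleGraph.Reachable.mono (resG_le_mono ?_)
      (handshake ((cls e1).filter (fun e => ¬ c e = true)) u x hux ?_ ?_ ?_)
    · intro e he
      rw [Finset.mem_filter] at he
      rw [gyr_eq_flip hcls he.1 hk]
      simp only [Bool.not_eq_true] at he
      rw [he.2]
      rfl
    · have h2 : gdeg ends (cls e1) u = 2 := by
        have := gbdeg_le_gdeg ends c (cls e1) u
        rcases hloc e1 u with h | h <;> omega
      have := filter_deg_not (ends := ends) c (cls e1) u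
      rw [h2, hu] at this
      rw [show ∑ e ∈ (cls e1).filter (fun e => ¬ c e = true), emult ends e u = 1 by omega]
      exact odd_one
    · have h2 : gdeg ends (cls e1) x = 2 := by
        have := gbdeg_le_gdeg ends c (cls e1) x
        rcases hloc e1 x with h | h <;> omega
      have := filter_deg_not (ends := ends) c (cls e1) x
      rw [h2, hx] at this
      rw [show ∑ e ∈ (cls e1).filter (fun e => ¬ c e = true), emult ends e x = 1 by omega]
      exact odd_one
    · intro v hvu hvx
      have hnb : gbdeg ends c (cls e1) v ≠ 1 :=
        boundary_card hmem hcls hlen hloc hk hu hx hux hvu hvx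
      have hle := gbdeg_le_gdeg ends c (cls e1) v
      have := filter_deg_not (ends := ends) c (cls e1) v
      rcases hloc e1 v with h | h
      · rw [show ∑ e ∈ (cls e1).filter (fun e => ¬ c e = true), emult ends e v = 0 by omega]
        exact Even.zero
      · rcases Nat.lt_or_ge (gbdeg ends c (cls e1) v) 1 with h1 | h1
        · rw [show ∑ e ∈ (cls e1).filter (fun e => ¬ c e = true), emult ends e v = 2 by omega]
          exact even_two
        · rw [show ∑ e ∈ (cls e1).filter (fun e => ¬ c e = true), emult ends e v = 0 by omega]
          exact Even.zero

include hmem hcls hlen hloc in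
lemma cut_bwd {u x : V} {e1 : E}
    (hu : gbdeg ends c (cls e1) u = 1) (hx : gbdeg ends c (cls e1) x = 1) (hux : u ≠ x)
    (hr : (resG ends ((cls e1).filter
      (fun e => gyr ends cls punct c e = true))).Reachable u x) :
    (monoGraph ends c true).Reachable u x := by
  by_cases hk : KeepC ends punct c (cls e1)
  · refine hr.mono (resG_le_mono ?_)
    intro e he
    rw [Finset.mem_filter] at he
    rw [← gyr_eq_keep hcls he.1 hk]
    exact he.2
  · refine SimpleGraph.Reachable.mono (resG_le_mono ?_)
      (handshake ((cls e1).filter (fun e => c e = true)) u x hux ?_ ?_ ?_)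
    · intro e he
      rw [Finset.mem_filter] at he
      exact he.2
    · rw [filter_deg (ends := ends) c (cls e1) u, hu]
      exact odd_one
    · rw [filter_deg (ends := ends) c (cls e1) x, hx]
      exact odd_one
    · intro v hvu hvx
      have hnb : gbdeg ends c (cls e1) v ≠ 1 :=
        boundary_card hmem hcls hlen hloc hk hu hx hux hvu hvx
      rw [filter_deg (ends := ends) c (cls e1) v]
      have hle := gbdeg_le_gdeg ends c (cls e1) v
      have h02 : gdeg ends (cls e1) v = 0 ∨ gdeg ends (cls e1) v = 2 := hloc e1 v
      rcases Nat.lt_or_ge (gbdeg ends c (cls e1) v) 1 with h1 | h1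
      · rw [show gbdeg ends c (cls e1) v = 0 by omega]
        exact Even.zero
      · rw [show gbdeg ends c (cls e1) v = 2 by omega]
        exact even_two

include hmem hcls in
lemma aux_walk (X : V → Prop) (dW : E → Bool) (G2 : SimpleGraph V)
    (HINT : ∀ x, ¬ X x → ∃ T : Finset E, (∃ e0, T = cls e0) ∧
      ∀ f, dW f = true → 1 ≤ emult ends f x → f ∈ T)
    (HB : ∀ (x : V) (e : E), X x → dW e = true → 1 ≤ emult ends e x →
      gbdeg ends dW (cls e) x = 1)
    (HCUT : ∀ (u x : V) (e1 : E), X u → X x → u ≠ x → gbdeg ends dW (cls e1) u = 1 →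
      gbdeg ends dW (cls e1) x = 1 →
      (resG ends ((cls e1).filter (fun e => dW e = true))).Reachable u x →
      G2.Reachable u x) :
    ∀ {x w : V}, (monoGraph ends dW true).Walk x w → X w → ∀ u, X u →
      (x = u ∨ ∃ e1, dW e1 = true ∧ 1 ≤ emult ends e1 x ∧ gbdeg ends dW (cls e1) u = 1 ∧
        (resG ends ((cls e1).filter (fun e => dW e = true))).Reachable u x) →
      G2.Reachable u w := by
  intro x w W
  induction W with
  | nil =>
    rename_i x
    intro hw u hu hcase
    rcases hcase with rfl | ⟨e1, he1b, he1x, hgbu, hre⟩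
    · exact SimpleGraph.Reachable.refl _
    · by_cases hux : u = x
      · exact hux ▸ SimpleGraph.Reachable.refl u
      · exact HCUT u x e1 hu hw hux hgbu (HB x e1 hw he1b he1x) hre
  | cons hadj p ih =>
    rename_i x y w
    intro hw u hu hcase
    obtain ⟨hxy, e2, he2b, he2ends⟩ := hadj
    obtain ⟨he2x, he2y⟩ := emult_of_ne ends hxy he2ends
    have hstep : (resG ends ((cls e2).filter (fun e => dW e = true))).Adj x y :=
      ⟨hxy, e2, Finset.mem_filter.mpr ⟨hmem e2, he2b⟩, he2ends⟩
    by_cases hX : X x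
    · have hrux : G2.Reachable u x := by
        rcases hcase with rfl | ⟨e1, he1b, he1x, hgbu, hre⟩
        · exact SimpleGraph.Reachable.refl _
        · by_cases hux : u = x
          · exact hux ▸ SimpleGraph.Reachable.refl u
          · exact HCUT u x e1 hu hX hux hgbu (HB x e1 hX he1b he1x) hre
      refine hrux.trans (ih hw x hX (Or.inr ⟨e2, he2b, he2y.ge, ?_, hstep.reachable⟩))
      exact HB x e2 hX he2b he2x.ge
    · obtain ⟨T, ⟨e0, rfl⟩, hT⟩ := HINT x hX
      rcases hcase with rfl | ⟨e1, he1b, he1x, hgbu, hre⟩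
      · exact absurd hu hX
      · have hcls1 : cls e1 = cls e0 := hcls e0 e1 (hT e1 he1b he1x)
        have hcls2 : cls e2 = cls e0 := hcls e0 e2 (hT e2 he2b he2x.ge)
        apply ih hw u hu
        refine Or.inr ⟨e2, he2b, he2y.ge, ?_, ?_⟩
        · rw [hcls2, ← hcls1]; exact hgbu
        · have : (resG ends ((cls e2).filter (fun e => dW e = true))).Reachable u x := by
            rw [hcls2, ← hcls1]; exact hre
          exact this.trans hstep.reachable

end Cut

section Main
variable {ends : E → Sym2 V} {cls : E → Finset E} {punct : Finset E → Bool} {c : E → Bool}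
variable (hmem : ∀ e, e ∈ cls e)
variable (hcls : ∀ e e', e' ∈ cls e → cls e' = cls e)
variable (hlen : ∀ e, (cls e).card ≤ 4)
variable (hloc : ∀ e v, gdeg ends (cls e) v = 0 ∨ gdeg ends (cls e) v = 2)
variable (hdeg : ∀ v, vdeg ends v = 2 ∨ vdeg ends v = 4)
variable (hc : IsFPL ends c)

include hmem hloc in
lemma black_gdeg2 {x : V} {e : E} (he : 1 ≤ emult ends e x) : gdeg ends (cls e) x = 2 := by
  have := term_le_gdeg (ends := ends) (hmem e) (v := x)
  rcases hloc e x with h | h <;> omega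

include hmem hcls hloc hdeg hc in
lemma nonexpo_flip {v : V} (hv : ¬ expo ends cls c v) :
    ∀ f, 1 ≤ emult ends f v → gyr ends cls punct c f = !(c f) := by
  obtain ⟨e0, e2, hgb0, hgd0, hgd2, hgb2, hne02, _, _, hbl, hwh⟩ :=
    nonexpo_struct hmem hcls hloc hdeg hc hv
  have hflip0 : ¬ KeepC ends punct c (cls e0) := by
    rintro ⟨-, halt⟩
    have := halt v hgd0
    omega
  have hflip2 : ¬ KeepC ends punct c (cls e2) := by
    rintro ⟨-, halt⟩
    have := halt v hgd2
    omega
  intro f hf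
  by_cases hcf : c f = true
  · exact gyr_eq_flip hcls (hbl f hcf hf) hflip0
  · rw [Bool.not_eq_true] at hcf
    exact gyr_eq_flip hcls (hwh f hcf hf) hflip2

include hmem hcls hloc hdeg hc in
lemma hint_bwd {x : V} (hx : ¬ expo ends cls c x) :
    ∃ T : Finset E, (∃ e0, T = cls e0) ∧
      ∀ f, gyr ends cls punct c f = true → 1 ≤ emult ends f x → f ∈ T := by
  obtain ⟨e0, e2, hgb0, hgd0, hgd2, hgb2, hne02, _, _, hbl, hwh⟩ :=
    nonexpo_struct hmem hcls hloc hdeg hc hx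
  refine ⟨cls e2, ⟨e2, rfl⟩, ?_⟩
  intro f hgf hf
  have hflipf := nonexpo_flip hmem hcls hloc hdeg hc (punct := punct) hx f hf
  rw [hflipf] at hgf
  have hcf : c f = false := by
    cases h : c f
    · rfl
    · rw [h] at hgf; exact absurd hgf (by simp)
  exact hwh f hcf hf

include hmem hcls hloc hdeg hc in
lemma hb_bwd {x : V} {e : E} (hx : expo ends cls c x)
    (he : gyr ends cls punct c e = true) (hem : 1 ≤ emult ends e x) :
    gbdeg ends (gyr ends cls punct c) (cls e) x = 1 := by
  have hgd : gdeg ends (cls e) x = 2 := black_gdeg2 hmem hloc hem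
  have hgb : gbdeg ends c (cls e) x = 1 := expo_boundary hmem hcls hloc hdeg hc hx hgd
  by_cases hk : KeepC ends punct c (cls e)
  · rw [gbdeg_gyr_keep hcls hk, hgb]
  · have := gbdeg_gyr_flip' hcls hk (e0 := e) x
    omega

include hmem hcls hlen hloc hdeg hc in
lemma main_fwd {u w : V} (hu : expo ends cls c u) (hw : expo ends cls c w)
    (hr : (monoGraph ends c true).Reachable u w) :
    (monoGraph ends (gyr ends cls punct c) true).Reachable u w := by
  obtain ⟨W⟩ := hr
  refine aux_walk hmem hcls (expo ends cls c) c _ ?_ ?_ ?_ W hw u hu (Or.inl rfl)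
  · intro x hx
    obtain ⟨e0, e2, _, _, _, _, _, _, _, hbl, _⟩ :=
      nonexpo_struct hmem hcls hloc hdeg hc hx
    exact ⟨cls e0, ⟨e0, rfl⟩, hbl⟩
  · intro x e hx he hem
    exact expo_boundary hmem hcls hloc hdeg hc hx (black_gdeg2 hmem hloc hem)
  · intro u x e1 _ _ hux hgbu hgbx hre
    exact cut_fwd hmem hcls hlen hloc hgbu hgbx hux hre

include hmem hcls hlen hloc hdeg hc in
lemma main_bwd {u w : V} (hu : expo ends cls c u) (hw : expo ends cls c w)
    (hr : (monoGraph ends (gyr ends cls punct c) true).Reachable u w) :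
    (monoGraph ends c true).Reachable u w := by
  obtain ⟨W⟩ := hr
  refine aux_walk hmem hcls (expo ends cls c) (gyr ends cls punct c) _ ?_ ?_ ?_ W hw u hu
    (Or.inl rfl)
  · intro x hx
    exact hint_bwd hmem hcls hloc hdeg hc hx
  · intro x e hx he hem
    exact hb_bwd hmem hcls hloc hdeg hc hx he hem
  · intro u x e1 hXu hXx hux hgbu hgbx hre
    have hgd : gdeg ends (cls e1) u = 2 := by
      have h1 := gbdeg_le_gdeg ends (gyr ends cls punct c) (cls e1) u
      rcases hloc e1 u with h | h <;> omega
    have hgd2 : gdeg ends (cls e1) x = 2 := by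
      have h1 := gbdeg_le_gdeg ends (gyr ends cls punct c) (cls e1) x
      rcases hloc e1 x with h | h <;> omega
    exact cut_bwd hmem hcls hlen hloc
      (expo_boundary hmem hcls hloc hdeg hc hXu hgd)
      (expo_boundary hmem hcls hloc hdeg hc hXx hgd2) hux hre

include hmem hcls hlen hloc hdeg hc in
lemma main_reach {u w : V} (hu : expo ends cls c u) (hw : expo ends cls c w) :
    (monoGraph ends c true).Reachable u w ↔
      (monoGraph ends (gyr ends cls punct c) true).Reachable u w :=
  ⟨main_fwd hmem hcls hlen hloc hdeg hc hu hw, main_bwd hmem hcls hlen hloc hdeg hc hu hw⟩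

end Main

section Neg
variable {ends : E → Sym2 V} {cls : E → Finset E} {punct : Finset E → Bool} {c : E → Bool}

lemma mono_neg_true : monoGraph ends (fun e => !(c e)) true = monoGraph ends c false := by
  ext v w
  constructor <;> rintro ⟨hvw, e, he, hee⟩ <;> refine ⟨hvw, e, ?_, hee⟩ <;>
    simpa using he

lemma mono_neg_false : monoGraph ends (fun e => !(c e)) false = monoGraph ends c true := by
  ext v w
  constructor <;> rintro ⟨hvw, e, he, hee⟩ <;> refine ⟨hvw, e, ?_, hee⟩ <;>
    simpa using he

lemma AltOn_neg {S : Finset E} : AltOn ends (fun e => !(c e)) S ↔ AltOn ends c S := by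
  constructor <;> intro h v hv <;> have h2 := h v hv <;>
    have h3 := gbdeg_add_neg ends c S v <;> omega

lemma gyr_neg : gyr ends cls punct (fun e => !(c e)) = fun e => !(gyr ends cls punct c e) := by
  funext e
  rw [gyr_eq, gyr_eq]
  have hiff : KeepC ends punct (fun e => !(c e)) (cls e) ↔ KeepC ends punct c (cls e) := by
    unfold KeepC
    rw [AltOn_neg]
  by_cases hk : KeepC ends punct c (cls e)
  · rw [if_pos (hiff.mpr hk), if_pos hk]
  · rw [if_neg (fun h => hk (hiff.mp h)), if_neg hk]

lemma IsFPL_neg (hc : IsFPL ends c) : IsFPL ends (fun e => !(c e)) := by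
  intro v
  have h := hc v
  have h2 := bdeg_add_neg (ends := ends) (c := c) v
  constructor <;> intro hv <;> [have := h.1 hv; have := h.2 hv] <;> omega

end Neg

section Transfer
variable {H1 H2 : SimpleGraph V} {Y : V → Prop}

lemma walk_transfer (hAdj : ∀ x z, ¬ Y x → (H1.Adj x z ↔ H2.Adj x z)) {v0 : V}
    (hcl : ∀ x, H1.Reachable v0 x → ¬ Y x) :
    ∀ {x y : V}, H1.Walk x y → H1.Reachable v0 x → H2.Reachable v0 x → H2.Reachable v0 y := by
  intro x y W
  induction W with
  | nil => exact fun _ h2 => h2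
  | cons hadj p ih =>
    intro h1 h2
    have hx := hcl _ h1
    have hadj2 := (hAdj _ _ hx).mp hadj
    exact ih (h1.trans hadj.reachable) (h2.trans hadj2.reachable)

lemma reach_transfer (hAdj : ∀ x z, ¬ Y x → (H1.Adj x z ↔ H2.Adj x z)) {v0 : V}
    (hcl : ∀ x, H1.Reachable v0 x → ¬ Y x) {y : V} (h : H1.Reachable v0 y) :
    H2.Reachable v0 y := by
  obtain ⟨W⟩ := h
  exact walk_transfer hAdj hcl W (SimpleGraph.Reachable.refl v0)
    (SimpleGraph.Reachable.refl v0)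

lemma reach_transfer_rev (hAdj : ∀ x z, ¬ Y x → (H1.Adj x z ↔ H2.Adj x z)) {v0 : V}
    (hcl : ∀ x, H1.Reachable v0 x → ¬ Y x) :
    ∀ {y : V}, H2.Reachable v0 y → H1.Reachable v0 y := by
  have key : ∀ {x y : V}, H2.Walk x y → H1.Reachable v0 x → H1.Reachable v0 y := by
    intro x y W
    induction W with
    | nil => exact fun h => h
    | cons hadj p ih =>
      intro h1
      exact ih (h1.trans ((hAdj _ _ (hcl _ h1)).mpr hadj).reachable)
  intro y h
  obtain ⟨W⟩ := h
  exact key W (SimpleGraph.Reachable.refl v0)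

end Transfer

section Count
open Classical in
/-- Transport of a single component of `H` to a component of `H'` (if it contains
an exposed vertex) or a component of `K'` (if not). -/
noncomputable def phiAux (ends : E → Sym2 V) (H H' K' : SimpleGraph V) (X : V → Prop)
    (hR : ∀ u w, X u → X w → (H.Reachable u w ↔ H'.Reachable u w))
    (hA : ∀ x z, ¬ X x → (H.Adj x z ↔ K'.Adj x z))
    (hP : ∀ v : V, vdeg ends v = 2 → X v)
    (C : H.ConnectedComponent) (hC : ∀ v ∈ C.supp, vdeg ends v ≠ 2) :
    {C : H'.ConnectedComponent // ∀ v ∈ C.supp, vdeg ends v ≠ 2} ⊕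
      {C : K'.ConnectedComponent // ∀ v ∈ C.supp, vdeg ends v ≠ 2} :=
  if h : ∃ x, x ∈ C.supp ∧ X x then
    Sum.inl ⟨H'.connectedComponentMk h.choose, by
      intro v hv hdeg2
      have hXv : X v := hP v hdeg2
      have hspec := h.choose_spec
      rw [SimpleGraph.ConnectedComponent.mem_supp_iff] at hv
      have hreach' : H'.Reachable v h.choose := SimpleGraph.ConnectedComponent.exact hv
      have hreach : H.Reachable v h.choose := (hR v h.choose hXv hspec.2).mpr hreach'
      have hvC : v ∈ C.supp := by
        rw [SimpleGraph.ConnectedComponent.mem_supp_iff,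
          ← (SimpleGraph.ConnectedComponent.mem_supp_iff C h.choose).mp hspec.1]
        exact SimpleGraph.ConnectedComponent.sound hreach
      exact hC v hvC hdeg2⟩
  else
    Sum.inr ⟨K'.connectedComponentMk (Classical.choose C.exists_rep), by
      push_neg at h
      have hv0 : H.connectedComponentMk (Classical.choose C.exists_rep) = C :=
        Classical.choose_spec C.exists_rep
      have hclX : ∀ x, H.Reachable (Classical.choose C.exists_rep) x → ¬ X x := by
        intro x hx
        refine h x ?_
        rw [SimpleGraph.ConnectedComponent.mem_supp_iff, ← hv0]
        exact (SimpleGraph.ConnectedComponent.sound hx).symm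
      intro v hv hdeg2
      rw [SimpleGraph.ConnectedComponent.mem_supp_iff] at hv
      have hreach' : K'.Reachable (Classical.choose C.exists_rep) v :=
        (SimpleGraph.ConnectedComponent.exact hv).symm
      have hreach := reach_transfer_rev hA hclX hreach'
      have hvC : v ∈ C.supp := by
        rw [SimpleGraph.ConnectedComponent.mem_supp_iff, ← hv0]
        exact (SimpleGraph.ConnectedComponent.sound hreach).symm
      exact hC v hvC hdeg2⟩

/-- Transport of all components (of both colors). -/
noncomputable def quadF (ends : E → Sym2 V) (G1 G2 G1' G2' : SimpleGraph V) (X : V → Prop)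
    (hR1 : ∀ u w, X u → X w → (G1.Reachable u w ↔ G1'.Reachable u w))
    (hR2 : ∀ u w, X u → X w → (G2.Reachable u w ↔ G2'.Reachable u w))
    (hA1 : ∀ x z, ¬ X x → (G1.Adj x z ↔ G2'.Adj x z))
    (hA2 : ∀ x z, ¬ X x → (G2.Adj x z ↔ G1'.Adj x z))
    (hP : ∀ v : V, vdeg ends v = 2 → X v) :
    ({C : G1.ConnectedComponent // ∀ v ∈ C.supp, vdeg ends v ≠ 2} ⊕
      {C : G2.ConnectedComponent // ∀ v ∈ C.supp, vdeg ends v ≠ 2}) →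
    ({C : G1'.ConnectedComponent // ∀ v ∈ C.supp, vdeg ends v ≠ 2} ⊕
      {C : G2'.ConnectedComponent // ∀ v ∈ C.supp, vdeg ends v ≠ 2})
  | Sum.inl ⟨C, hC⟩ => phiAux ends G1 G1' G2' X hR1 hA1 hP C hC
  | Sum.inr ⟨C, hC⟩ => (phiAux ends G2 G2' G1' X hR2 hA2 hP C hC).swap

end Count

lemma quad_leftinv (ends : E → Sym2 V) (G1 G2 G1' G2' : SimpleGraph V) (X : V → Prop)
    (hR1 : ∀ u w, X u → X w → (G1.Reachable u w ↔ G1'.Reachable u w))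
    (hR2 : ∀ u w, X u → X w → (G2.Reachable u w ↔ G2'.Reachable u w))
    (hA1 : ∀ x z, ¬ X x → (G1.Adj x z ↔ G2'.Adj x z))
    (hA2 : ∀ x z, ¬ X x → (G2.Adj x z ↔ G1'.Adj x z))
    (hP : ∀ v : V, vdeg ends v = 2 → X v)
    (hR1' : ∀ u w, X u → X w → (G1'.Reachable u w ↔ G1.Reachable u w))
    (hR2' : ∀ u w, X u → X w → (G2'.Reachable u w ↔ G2.Reachable u w))
    (hA1' : ∀ x z, ¬ X x → (G1'.Adj x z ↔ G2.Adj x z))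
    (hA2' : ∀ x z, ¬ X x → (G2'.Adj x z ↔ G1.Adj x z)) :
    ∀ p, quadF ends G1' G2' G1 G2 X hR1' hR2' hA1' hA2' hP
      (quadF ends G1 G2 G1' G2' X hR1 hR2 hA1 hA2 hP p) = p := by
  have memsupp : ∀ (G : SimpleGraph V) (x y : V),
      x ∈ (G.connectedComponentMk y).supp ↔ G.Reachable x y := by
    intro G x y
    rw [SimpleGraph.ConnectedComponent.mem_supp_iff]
    exact ⟨SimpleGraph.ConnectedComponent.exact, SimpleGraph.ConnectedComponent.sound⟩
  intro p
  rcases p with ⟨C, hC⟩ | ⟨C, hC⟩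
  · simp only [quadF]
    unfold phiAux
    by_cases h : ∃ x, x ∈ C.supp ∧ X x
    · rw [dif_pos h]
      try simp only [quadF]
      have hxhat := h.choose_spec
      have h2 : ∃ x, x ∈ (G1'.connectedComponentMk h.choose).supp ∧ X x :=
        ⟨h.choose, (memsupp G1' _ _).mpr (SimpleGraph.Reachable.refl _), hxhat.2⟩
      rw [dif_pos h2]
      have hyhat := h2.choose_spec
      have hr' : G1'.Reachable h2.choose h.choose := (memsupp G1' _ _).mp hyhat.1
      have hr : G1.Reachable h2.choose h.choose := (hR1' _ _ hyhat.2 hxhat.2).mp hr'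
      refine congrArg Sum.inl (Subtype.ext ?_)
      exact (SimpleGraph.ConnectedComponent.sound hr).trans
        ((SimpleGraph.ConnectedComponent.mem_supp_iff C h.choose).mp hxhat.1)
    · rw [dif_neg h]
      push_neg at h
      set v0 := Classical.choose C.exists_rep with hv0def
      have hv0 : G1.connectedComponentMk v0 = C := Classical.choose_spec C.exists_rep
      have hclX : ∀ x, G1.Reachable v0 x → ¬ X x := by
        intro x hx
        refine h x ?_
        rw [SimpleGraph.ConnectedComponent.mem_supp_iff, ← hv0]
        exact (SimpleGraph.ConnectedComponent.sound hx).symm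
      try simp only [quadF]
      have h2 : ¬ ∃ x, x ∈ (G2'.connectedComponentMk v0).supp ∧ X x := by
        rintro ⟨x, hxmem, hxX⟩
        have hr' : G2'.Reachable v0 x := ((memsupp G2' _ _).mp hxmem).symm
        exact hclX x (reach_transfer_rev hA1 hclX hr') hxX
      rw [dif_neg h2]
      have hrep := Classical.choose_spec (G2'.connectedComponentMk v0).exists_rep
      set v1 := Classical.choose (G2'.connectedComponentMk v0).exists_rep with hv1def
      have hr' : G2'.Reachable v0 v1 := (SimpleGraph.ConnectedComponent.exact hrep).symm
      have hr : G1.Reachable v0 v1 := reach_transfer_rev hA1 hclX hr'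
      try simp only [Sum.swap, Sum.elim]
      refine congrArg Sum.inl (Subtype.ext ?_)
      exact (SimpleGraph.ConnectedComponent.sound hr).symm.trans hv0
  · simp only [quadF]
    unfold phiAux
    by_cases h : ∃ x, x ∈ C.supp ∧ X x
    · rw [dif_pos h]
      try simp only [Sum.swap, Sum.elim]
      try simp only [quadF]
      have hxhat := h.choose_spec
      have h2 : ∃ x, x ∈ (G2'.connectedComponentMk h.choose).supp ∧ X x :=
        ⟨h.choose, (memsupp G2' _ _).mpr (SimpleGraph.Reachable.refl _), hxhat.2⟩
      rw [dif_pos h2]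
      have hyhat := h2.choose_spec
      have hr' : G2'.Reachable h2.choose h.choose := (memsupp G2' _ _).mp hyhat.1
      have hr : G2.Reachable h2.choose h.choose := (hR2' _ _ hyhat.2 hxhat.2).mp hr'
      try simp only [Sum.swap, Sum.elim]
      refine congrArg Sum.inr (Subtype.ext ?_)
      exact (SimpleGraph.ConnectedComponent.sound hr).trans
        ((SimpleGraph.ConnectedComponent.mem_supp_iff C h.choose).mp hxhat.1)
    · rw [dif_neg h]
      push_neg at h
      set v0 := Classical.choose C.exists_rep with hv0def
      have hv0 : G2.connectedComponentMk v0 = C := Classical.choose_spec C.exists_rep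
      have hclX : ∀ x, G2.Reachable v0 x → ¬ X x := by
        intro x hx
        refine h x ?_
        rw [SimpleGraph.ConnectedComponent.mem_supp_iff, ← hv0]
        exact (SimpleGraph.ConnectedComponent.sound hx).symm
      try simp only [Sum.swap, Sum.elim]
      try simp only [quadF]
      have h2 : ¬ ∃ x, x ∈ (G1'.connectedComponentMk v0).supp ∧ X x := by
        rintro ⟨x, hxmem, hxX⟩
        have hr' : G1'.Reachable v0 x := ((memsupp G1' _ _).mp hxmem).symm
        exact hclX x (reach_transfer_rev hA2 hclX hr') hxX
      rw [dif_neg h2]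
      have hrep := Classical.choose_spec (G1'.connectedComponentMk v0).exists_rep
      set v1 := Classical.choose (G1'.connectedComponentMk v0).exists_rep with hv1def
      have hr' : G1'.Reachable v0 v1 := (SimpleGraph.ConnectedComponent.exact hrep).symm
      have hr : G2.Reachable v0 v1 := reach_transfer_rev hA2 hclX hr'
      refine congrArg Sum.inr (Subtype.ext ?_)
      exact (SimpleGraph.ConnectedComponent.sound hr).symm.trans hv0

lemma quad_count (ends : E → Sym2 V) (G1 G2 G1' G2' : SimpleGraph V) (X : V → Prop)
    (hR1 : ∀ u w, X u → X w → (G1.Reachable u w ↔ G1'.Reachable u w))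
    (hR2 : ∀ u w, X u → X w → (G2.Reachable u w ↔ G2'.Reachable u w))
    (hA1 : ∀ x z, ¬ X x → (G1.Adj x z ↔ G2'.Adj x z))
    (hA2 : ∀ x z, ¬ X x → (G2.Adj x z ↔ G1'.Adj x z))
    (hP : ∀ v : V, vdeg ends v = 2 → X v) :
    Nat.card {C : G1.ConnectedComponent // ∀ v ∈ C.supp, vdeg ends v ≠ 2} +
      Nat.card {C : G2.ConnectedComponent // ∀ v ∈ C.supp, vdeg ends v ≠ 2} =
    Nat.card {C : G1'.ConnectedComponent // ∀ v ∈ C.supp, vdeg ends v ≠ 2} +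
      Nat.card {C : G2'.ConnectedComponent // ∀ v ∈ C.supp, vdeg ends v ≠ 2} := by
  have hR1' : ∀ u w, X u → X w → (G1'.Reachable u w ↔ G1.Reachable u w) :=
    fun u w hu hw => (hR1 u w hu hw).symm
  have hR2' : ∀ u w, X u → X w → (G2'.Reachable u w ↔ G2.Reachable u w) :=
    fun u w hu hw => (hR2 u w hu hw).symm
  have hA1' : ∀ x z, ¬ X x → (G1'.Adj x z ↔ G2.Adj x z) :=
    fun x z hx => (hA2 x z hx).symm
  have hA2' : ∀ x z, ¬ X x → (G2'.Adj x z ↔ G1.Adj x z) :=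
    fun x z hx => (hA1 x z hx).symm
  rw [← Nat.card_sum, ← Nat.card_sum]
  exact Nat.card_congr
    ⟨quadF ends G1 G2 G1' G2' X hR1 hR2 hA1 hA2 hP,
     quadF ends G1' G2' G1 G2 X hR1' hR2' hA1' hA2' hP,
     quad_leftinv ends G1 G2 G1' G2' X hR1 hR2 hA1 hA2 hP hR1' hR2' hA1' hA2',
     quad_leftinv ends G1' G2' G1 G2 X hR1' hR2' hA1' hA2' hP hR1 hR2 hA1 hA2⟩

/-- **Gyration preserves monochromatic connectivity and the number of loops.**
If two degree-2 vertices are endpoints of a black (resp. white) path in `φ`,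
then they are endpoints of a black (resp. white) path in `H_Γ(φ)`; hence `H_Γ`
preserves the black and white endpoint pairings `(π_b, π_w)`, and it preserves
the total number `ℓ = ℓ_b + ℓ_w` of monochromatic cycles. -/
theorem gyration_preserves_connectivity (ends : E → Sym2 V) (cls : E → Finset E)
    (punct : Finset E → Bool)
    (hmem : ∀ e, e ∈ cls e)
    (hcls : ∀ e e', e' ∈ cls e → cls e' = cls e)
    (hlen : ∀ e, (cls e).card ≤ 4)
    (hloc : ∀ e v, gdeg ends (cls e) v = 0 ∨ gdeg ends (cls e) v = 2)
    (hdeg : ∀ v, vdeg ends v = 2 ∨ vdeg ends v = 4)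
    (c : E → Bool) (hc : IsFPL ends c) :
    (∀ v w : V, vdeg ends v = 2 → vdeg ends w = 2 → ∀ b : Bool,
        ((monoGraph ends c b).Reachable v w ↔
          (monoGraph ends (gyr ends cls punct c) b).Reachable v w)) ∧
      cycCount ends c true + cycCount ends c false =
        cycCount ends (gyr ends cls punct c) true +
          cycCount ends (gyr ends cls punct c) false := by
  classical
  have hcb : IsFPL ends (fun e => !(c e)) := IsFPL_neg hc
  -- exposure transfers to the complementary coloring
  have hfwdexp : ∀ v, ¬ expo ends cls c v → ¬ expo ends cls (fun e => !(c e)) v := by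
    intro v hv
    obtain ⟨e0, e2, _, _, hgd2, hgb2, _, _, _, _, _⟩ :=
      nonexpo_struct hmem hcls hloc hdeg hc hv
    intro hexpo
    have h1 := hexpo e2
    have h2 := gbdeg_add_neg ends c (cls e2) v
    omega
  have hrevexp : ∀ v, ¬ expo ends cls (fun e => !(c e)) v → ¬ expo ends cls c v := by
    intro v hv
    obtain ⟨e0, e2, _, _, hgd2, hgb2, _, _, _, _, _⟩ :=
      nonexpo_struct hmem hcls hloc hdeg hcb hv
    intro hexpo
    have h1 := hexpo e2
    have h2 := gbdeg_add_neg ends c (cls e2) v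
    omega
  have hR1 : ∀ u w, expo ends cls c u → expo ends cls c w →
      ((monoGraph ends c true).Reachable u w ↔
        (monoGraph ends (gyr ends cls punct c) true).Reachable u w) :=
    fun u w hu hw => main_reach hmem hcls hlen hloc hdeg hc hu hw
  have hR2 : ∀ u w, expo ends cls c u → expo ends cls c w →
      ((monoGraph ends c false).Reachable u w ↔
        (monoGraph ends (gyr ends cls punct c) false).Reachable u w) := by
    intro u w hu hw
    have hu' : expo ends cls (fun e => !(c e)) u := by
      by_contra hcon
      exact hrevexp u hcon hu
    have hw' : expo ends cls (fun e => !(c e)) w := by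
      by_contra hcon
      exact hrevexp w hcon hw
    have := main_reach hmem hcls hlen hloc hdeg hcb (punct := punct) hu' hw'
    rwa [mono_neg_true, gyr_neg, mono_neg_true] at this
  have hflip : ∀ x, ¬ expo ends cls c x → ∀ f, 1 ≤ emult ends f x →
      gyr ends cls punct c f = !(c f) :=
    fun x hx => nonexpo_flip hmem hcls hloc hdeg hc hx
  have hA1 : ∀ x z, ¬ expo ends cls c x →
      ((monoGraph ends c true).Adj x z ↔
        (monoGraph ends (gyr ends cls punct c) false).Adj x z) := by
    intro x z hx
    constructor
    · rintro ⟨hxz, e, he, hee⟩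
      refine ⟨hxz, e, ?_, hee⟩
      rw [hflip x hx e (emult_of_ne ends hxz hee).1.ge, he]
      rfl
    · rintro ⟨hxz, e, he, hee⟩
      rw [hflip x hx e (emult_of_ne ends hxz hee).1.ge] at he
      refine ⟨hxz, e, ?_, hee⟩
      revert he
      cases c e <;> simp
  have hA2 : ∀ x z, ¬ expo ends cls c x →
      ((monoGraph ends c false).Adj x z ↔
        (monoGraph ends (gyr ends cls punct c) true).Adj x z) := by
    intro x z hx
    constructor
    · rintro ⟨hxz, e, he, hee⟩
      refine ⟨hxz, e, ?_, hee⟩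
      rw [hflip x hx e (emult_of_ne ends hxz hee).1.ge, he]
      rfl
    · rintro ⟨hxz, e, he, hee⟩
      rw [hflip x hx e (emult_of_ne ends hxz hee).1.ge] at he
      refine ⟨hxz, e, ?_, hee⟩
      revert he
      cases c e <;> simp
  constructor
  · intro v w hv hw b
    have hvb := vdeg2_expo (cls := cls) hdeg hc hv
    have hwb := vdeg2_expo (cls := cls) hdeg hc hw
    cases b
    · exact hR2 v w hvb hwb
    · exact hR1 v w hvb hwb
  · have := quad_count ends (monoGraph ends c true) (monoGraph ends c false)
      (monoGraph ends (gyr ends cls punct c) true)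
      (monoGraph ends (gyr ends cls punct c) false) (expo ends cls c)
      hR1 hR2 hA1 hA2 (fun v hv => vdeg2_expo (cls := cls) hdeg hc hv)
    simpa [cycCount] using this
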